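/- Let b ≥ 1 and τ ∈ {τ^b_0, τ^b_1}, and let φ be an instance of cubic monotone one-in-three 3-SAT with m clauses. If (sup, sig) is a τ-region of the translator T such that sig(k_0) = … = sig(k_{6m−1}) = (0,b), or such that sig(k_0) = … = sig(k_{6m−1}) = (b,0), then φ has a one-in-three model. -/

import Mathlib

/-! ## Transition systems -/

/-- A transition system over ambient state type `S` and event type `E`:
a set of states, a set of events, and a (deterministic or not) labeled
transition relation whose transitions stay inside the state/event sets. -/
structure TS (S E : Type) where
  states : Set S
  events : Set E
  tr : S → E → S → Prop
  tr_mem : ∀ ⦃s e s'⦄, tr s e s' → s ∈ states ∧ e ∈ events ∧ s' ∈ states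

/-- Event `e` occurs at state `s`. -/
def TS.occurs {S E : Type} (A : TS S E) (e : E) (s : S) : Prop := ∃ s', A.tr s e s'

/-! ## The types of nets `τ^b_t`, `t ∈ {0,1,2,3}` -/

/-- Events of the types of nets: pairs `(m,n)` or group events `c ∈ ℤ_{b+1}`. -/
inductive Tev where
  | pr (m n : ℕ)
  | gr (c : ℕ)
deriving DecidableEq

def Tev.minus : Tev → ℕ | .pr m _ => m | .gr _ => 0
def Tev.plus : Tev → ℕ | .pr _ n => n | .gr _ => 0
def Tev.absv : Tev → ℕ | .pr _ _ => 0 | .gr c => c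

/-- Membership in the event set of the type `τ^b_t`:
for `t ∈ {1,3}` (pure types) the pair events `(m,n)` with `m,n ≥ 1` are discarded;
for `t ∈ {2,3}` the pair `(0,0)` is discarded and the group events `0,…,b` are present;
for `t ∈ {0,1}` there are no group events. -/
def tevOk (b t : ℕ) : Tev → Prop
  | .pr m n => m ≤ b ∧ n ≤ b ∧ ((t = 1 ∨ t = 3) → (m = 0 ∨ n = 0)) ∧
      ((t = 2 ∨ t = 3) → ¬(m = 0 ∧ n = 0))
  | .gr c => c ≤ b ∧ (t = 2 ∨ t = 3)

/-- The partial transition function of the types `τ^b_t` on the states `{0,…,b}`. -/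
def tevStep (b s : ℕ) : Tev → Option ℕ
  | .pr m n => if m ≤ s ∧ s - m + n ≤ b then some (s - m + n) else none
  | .gr c => some ((s + c) % (b + 1))

/-! ## Regions, ESSP and SSP -/

/-- A `τ^b_t`-region of a transition system `A`. -/
structure Region (b t : ℕ) {S E : Type} (A : TS S E) where
  sup : S → ℕ
  sig : E → Tev
  sup_le : ∀ s ∈ A.states, sup s ≤ b
  sig_ok : ∀ e ∈ A.events, tevOk b t (sig e)
  resp : ∀ ⦃s e s'⦄, A.tr s e s' → tevStep b (sup s) (sig e) = some (sup s')

/-- A region solves the ESSP atom `(e,s)` if `sig e` does not occur at `sup s` in `τ`. -/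
def Region.solvesESSP {b t : ℕ} {S E : Type} {A : TS S E} (R : Region b t A)
    (e : E) (s : S) : Prop :=
  tevStep b (R.sup s) (R.sig e) = none

/-- A region solves the SSP atom `(s,s')` if `sup s ≠ sup s'`. -/
def Region.solvesSSP {b t : ℕ} {S E : Type} {A : TS S E} (R : Region b t A)
    (s s' : S) : Prop :=
  R.sup s ≠ R.sup s'

/-- `A` has the `τ^b_t`-ESSP: every ESSP atom is solvable. -/
def TS.hasESSP (b t : ℕ) {S E : Type} (A : TS S E) : Prop :=
  ∀ e ∈ A.events, ∀ s ∈ A.states, ¬ A.occurs e s → ∃ R : Region b t A, R.solvesESSP e s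

/-- `A` has the `τ^b_t`-SSP: every SSP atom is solvable. -/
def TS.hasSSP (b t : ℕ) {S E : Type} (A : TS S E) : Prop :=
  ∀ s ∈ A.states, ∀ s' ∈ A.states, s ≠ s' → ∃ R : Region b t A, R.solvesSSP s s'

/-- `A` is `τ^b_t`-feasible. -/
def TS.feasible (b t : ℕ) {S E : Type} (A : TS S E) : Prop :=
  A.hasESSP b t ∧ A.hasSSP b t

/-! ## Combinators: linear TSs, relabeled states, unions -/

/-- The linear TS given by the word `w`: states `0,…,w.length`, and an
`e`-labeled transition from `s` to `s+1` whenever `w[s] = e`. -/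
def TS.chain {E : Type} (w : List E) : TS ℕ E where
  states := {s | s ≤ w.length}
  events := {e | e ∈ w}
  tr s e s' := w[s]? = some e ∧ s' = s + 1
  tr_mem := by
    rintro s e s' ⟨h, rfl⟩
    have hs : s < w.length := by
      by_contra hc
      rw [List.getElem?_eq_none (Nat.le_of_not_lt hc)] at h
      cases h
    obtain ⟨hlt, rfl⟩ := List.getElem?_eq_some_iff.mp h
    exact ⟨Nat.le_of_lt hs, List.getElem_mem hlt, hs⟩

/-- Renaming the states of a TS along `f`. -/
def TS.mapStates {S S' E : Type} (f : S → S') (A : TS S E) : TS S' E where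
  states := f '' A.states
  events := A.events
  tr s e s' := ∃ a a', A.tr a e a' ∧ s = f a ∧ s' = f a'
  tr_mem := by
    rintro s e s' ⟨a, a', h, rfl, rfl⟩
    obtain ⟨h1, h2, h3⟩ := A.tr_mem h
    exact ⟨⟨a, h1, rfl⟩, h2, ⟨a', h3, rfl⟩⟩

/-- The union `U(A_i)_{i : ι}` of a family of TSs over the same ambient types. -/
def TS.unionFam {ι S E : Type} (F : ι → TS S E) : TS S E where
  states := ⋃ i, (F i).states
  events := ⋃ i, (F i).events
  tr s e s' := ∃ i, (F i).tr s e s'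
  tr_mem := by
    rintro s e s' ⟨i, h⟩
    obtain ⟨h1, h2, h3⟩ := (F i).tr_mem h
    exact ⟨Set.mem_iUnion.2 ⟨i, h1⟩, Set.mem_iUnion.2 ⟨i, h2⟩, Set.mem_iUnion.2 ⟨i, h3⟩⟩

/-- The SSP for a union: all SSP atoms given by distinct states of the *same*
constituent are solvable by regions of the union. -/
def unionSSP (b t : ℕ) {ι S E : Type} (F : ι → TS S E) : Prop :=
  ∀ i : ι, ∀ s ∈ (F i).states, ∀ s' ∈ (F i).states, s ≠ s' →
    ∃ R : Region b t (TS.unionFam F), R.solvesSSP s s'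
/-! ## Cubic monotone one-in-three 3-SAT -/

/-- An instance `φ = {C_0,…,C_{m-1}}` of cubic monotone one-in-three 3-SAT with
variables `V(φ) = {X_0,…,X_{m-1}}` (identified with `Fin m`): every clause
`C_i = {X_{i,0}, X_{i,1}, X_{i,2}}` consists of three distinct variables and every
variable occurs in exactly three clauses. -/
structure SatInstance (m : ℕ) where
  C : Fin m → Fin 3 → Fin m
  clause_distinct : ∀ i : Fin m, Function.Injective (C i)
  cubic : ∀ v : Fin m,
    (Finset.univ.filter (fun p : Fin m × Fin 3 => C p.1 p.2 = v)).card = 3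

/-- `M` is a one-in-three model of `φ`: every clause contains exactly one variable of `M`. -/
def SatInstance.model {m : ℕ} (φ : SatInstance m) (M : Set (Fin m)) : Prop :=
  ∀ i : Fin m, ∃! r : Fin 3, φ.C i r ∈ M

/-! ## Events of the gadgets -/

inductive Ev where
  | k | z | z0 | z1 | o0 | o1 | o2 | u
  | kj (j : ℕ)  -- the interface events k_j
  | x (i : ℕ)   -- the events x_i
  | p (i : ℕ)   -- the events p_i
  | vj (j : ℕ)  -- the events v_j
  | X (v : ℕ)   -- the variable events X_v
deriving DecidableEq

/-! ## The gadget TSs (states are pairs (tag, position)) -/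

/-- `H_0`, with `h_{0,i} = (0,i)`. -/
def H0 (b : ℕ) : TS (ℕ × ℕ) Ev :=
  (TS.chain (List.replicate b Ev.k ++ List.replicate b Ev.z ++ [Ev.o0] ++
    List.replicate b Ev.k ++ List.replicate b Ev.z ++ List.replicate b Ev.o1 ++
    List.replicate b Ev.k)).mapStates (fun i => (0, i))

/-- `H_1`, with `h_{1,i} = (0,i)`. -/
def H1 (b : ℕ) : TS (ℕ × ℕ) Ev :=
  (TS.chain (List.replicate b Ev.k ++ [Ev.z0, Ev.o0] ++ List.replicate b Ev.k ++
    [Ev.z1, Ev.z0, Ev.o2] ++ List.replicate b Ev.k)).mapStates (fun i => (0, i))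

/-- `H_2`, with `h_{2,i} = (0,i)`. -/
def H2 (b : ℕ) : TS (ℕ × ℕ) Ev :=
  (TS.chain (List.replicate b Ev.k ++ [Ev.o0] ++ List.replicate b Ev.k ++
    [Ev.o2] ++ List.replicate b Ev.k)).mapStates (fun i => (0, i))

/-- `D_{j,0}`, with `d_{j,0,i} = (j+1,i)`. -/
def D0 (b j : ℕ) : TS (ℕ × ℕ) Ev :=
  (TS.chain ([Ev.o0, Ev.kj j] ++ List.replicate (b+1) Ev.o1)).mapStates
    (fun i => (j + 1, i))

/-- `D_{j,1}`, with `d_{j,1,i} = (j+1,i)`. -/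
def D1 (b j : ℕ) : TS (ℕ × ℕ) Ev :=
  (TS.chain [Ev.o0, Ev.kj j, Ev.o2]).mapStates (fun i => (j + 1, i))

/-- The word of the gadget `T_{i,a}` (`a ∈ {0,1,2}`) of the translator `T`. -/
def Tword (b : ℕ) {m : ℕ} (φ : SatInstance m) (i : Fin m) (a : Fin 3) : List Ev :=
  if a = 0 then
    [Ev.kj (6 * (i : ℕ))] ++ List.replicate b (Ev.X ((φ.C i 0 : Fin m) : ℕ)) ++
    [Ev.x (i : ℕ)] ++ List.replicate b (Ev.X ((φ.C i 2 : Fin m) : ℕ)) ++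
    [Ev.kj (6 * (i : ℕ) + 1)]
  else if a = 1 then
    [Ev.kj (6 * (i : ℕ) + 2)] ++ List.replicate b (Ev.X ((φ.C i 1 : Fin m) : ℕ)) ++
    [Ev.p (i : ℕ), Ev.kj (6 * (i : ℕ) + 3)]
  else
    [Ev.kj (6 * (i : ℕ) + 4), Ev.x (i : ℕ), Ev.p (i : ℕ), Ev.kj (6 * (i : ℕ) + 5)]

/-- The gadget `T_{i,a}` of the translator `T`, with states `t_{i,a,pos} = (tag, pos)`. -/
def Tgad (b tag : ℕ) {m : ℕ} (φ : SatInstance m) (i : Fin m) (a : Fin 3) :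
    TS (ℕ × ℕ) Ev :=
  (TS.chain (Tword b φ i a)).mapStates (fun pos => (tag, pos))

/-- The translator `T = U(T_{0,0}, T_{0,1}, T_{0,2}, …, T_{m-1,2})` (standalone,
with `t_{i,a,pos} = (3i+a+1, pos)`). -/
def Ttrans (b : ℕ) {m : ℕ} (φ : SatInstance m) : TS (ℕ × ℕ) Ev :=
  TS.unionFam (fun q : Fin m × Fin 3 => Tgad b (3 * (q.1 : ℕ) + (q.2 : ℕ) + 1) φ q.1 q.2)

/-- `H_3`, with `h_{3,0,i} = (0,i)` and `h_{3,1,i} = (1,i)`: the union of the path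
`h_{3,0,0} --k^b--> h_{3,0,b}` and the path
`h_{3,0,0} --u--> h_{3,1,0} --k^{b-1}--> h_{3,1,b-1} --z--> h_{3,0,b}`. -/
def H3 (b : ℕ) : TS (ℕ × ℕ) Ev :=
  TS.unionFam (fun c : Bool =>
    if c then (TS.chain (List.replicate b Ev.k)).mapStates (fun i => (0, i))
    else (TS.chain ([Ev.u] ++ List.replicate (b-1) Ev.k ++ [Ev.z])).mapStates
      (fun i => if i = 0 then (0, 0) else if i = b + 1 then (0, b) else (1, i - 1)))

/-- The set `E_0 = {(m,m) : 1 ≤ m ≤ b} ∪ {0}`. -/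
def Ezero (b : ℕ) : Set Tev :=
  {e | (∃ q, 1 ≤ q ∧ q ≤ b ∧ e = Tev.pr q q) ∨ e = Tev.gr 0}

/-- The first row `f_{j,0,0} --k^b--> f_{j,0,b}` of `F_j`, with `f_{j,0,i} = (4j+2, i)`. -/
def Fch0 (b j : ℕ) : TS (ℕ × ℕ) Ev :=
  (TS.chain (List.replicate b Ev.k)).mapStates (fun i => (4 * j + 2, i))

/-- The second row `f_{j,0,0} --v_j--> f_{j,1,0} --k^{b-1}--> f_{j,1,b-1} --X_j--> f_{j,0,b}`
of `F_j`, with `f_{j,1,i} = (4j+3, i)`. -/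
def Fch1 (b j : ℕ) : TS (ℕ × ℕ) Ev :=
  (TS.chain ([Ev.vj j] ++ List.replicate (b-1) Ev.k ++ [Ev.X j])).mapStates
    (fun i => if i = 0 then (4 * j + 2, 0) else if i = b + 1 then (4 * j + 2, b)
      else (4 * j + 3, i - 1))

/-- `F_j` as the union of its two rows. -/
def Fgad (b j : ℕ) : TS (ℕ × ℕ) Ev :=
  TS.unionFam (fun c : Bool => if c then Fch0 b j else Fch1 b j)

/-- `G_j`, with `g_{j,i} = (4j+4, i)`. -/
def Ggad (b j : ℕ) : TS (ℕ × ℕ) Ev :=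
  (TS.chain (List.replicate b Ev.k ++ [Ev.X j])).mapStates (fun i => (4 * j + 4, i))

/-- The clause gadget `T_i` (of the translator for the group-extended types),
with `t_{i,pos} = (4i+5, pos)`. -/
def Tgad2 (b : ℕ) {m : ℕ} (φ : SatInstance m) (i : Fin m) : TS (ℕ × ℕ) Ev :=
  (TS.chain (List.replicate b Ev.k ++
    [Ev.X ((φ.C i 0 : Fin m) : ℕ), Ev.X ((φ.C i 1 : Fin m) : ℕ),
     Ev.X ((φ.C i 2 : Fin m) : ℕ), Ev.z] ++ List.replicate b Ev.k)).mapStates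
    (fun pos => (4 * (i : ℕ) + 5, pos))

/-- The translator `T_τ = U(F_0, G_0, …, F_{m-1}, G_{m-1}, T_0, …, T_{m-1})`
for the group-extended types. -/
def Ttrans2fam (b : ℕ) {m : ℕ} (φ : SatInstance m) : Fin m × Fin 3 → TS (ℕ × ℕ) Ev :=
  fun q => if q.2 = 0 then Fgad b (q.1 : ℕ)
    else if q.2 = 1 then Ggad b (q.1 : ℕ) else Tgad2 b φ q.1

def Ttrans2 (b : ℕ) {m : ℕ} (φ : SatInstance m) : TS (ℕ × ℕ) Ev :=
  TS.unionFam (Ttrans2fam b φ)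
/-! ## The key unions and the unions of key and translator -/

/-- The family of constituents of the key `K_{τ^b_0} = U(H_0, D_{0,0},…,D_{6m-1,0})`. -/
def K0fam (b m : ℕ) : Option (Fin (6 * m)) → TS (ℕ × ℕ) Ev
  | none => H0 b
  | some j => D0 b (j : ℕ)

def K0 (b m : ℕ) : TS (ℕ × ℕ) Ev := TS.unionFam (K0fam b m)

/-- The family of constituents of the key `K_{τ^b_1} = U(H_1, D_{0,1},…,D_{6m-1,1})`. -/
def K1fam (b m : ℕ) : Option (Fin (6 * m)) → TS (ℕ × ℕ) Ev
  | none => H1 b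
  | some j => D1 b (j : ℕ)

def K1 (b m : ℕ) : TS (ℕ × ℕ) Ev := TS.unionFam (K1fam b m)

/-- The family of constituents of the key `K = U(H_2, D_{0,1},…,D_{6m-1,1})`. -/
def K2fam (b m : ℕ) : Option (Fin (6 * m)) → TS (ℕ × ℕ) Ev
  | none => H2 b
  | some j => D1 b (j : ℕ)

def K2 (b m : ℕ) : TS (ℕ × ℕ) Ev := TS.unionFam (K2fam b m)

/-- The family of constituents of `U_{τ^b_0} = U(H_0, D_{0,0},…,D_{6m-1,0}, T)`. -/
def U0fam (b : ℕ) {m : ℕ} (φ : SatInstance m) :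
    Option (Fin (6 * m) ⊕ Fin m × Fin 3) → TS (ℕ × ℕ) Ev
  | none => H0 b
  | some (.inl j) => D0 b (j : ℕ)
  | some (.inr q) => Tgad b (6 * m + 1 + 3 * (q.1 : ℕ) + (q.2 : ℕ)) φ q.1 q.2

def U0 (b : ℕ) {m : ℕ} (φ : SatInstance m) : TS (ℕ × ℕ) Ev := TS.unionFam (U0fam b φ)

/-- The family of constituents of `U_{τ^b_1} = U(H_1, D_{0,1},…,D_{6m-1,1}, T)`. -/
def U1fam (b : ℕ) {m : ℕ} (φ : SatInstance m) :
    Option (Fin (6 * m) ⊕ Fin m × Fin 3) → TS (ℕ × ℕ) Ev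
  | none => H1 b
  | some (.inl j) => D1 b (j : ℕ)
  | some (.inr q) => Tgad b (6 * m + 1 + 3 * (q.1 : ℕ) + (q.2 : ℕ)) φ q.1 q.2

def U1 (b : ℕ) {m : ℕ} (φ : SatInstance m) : TS (ℕ × ℕ) Ev := TS.unionFam (U1fam b φ)

/-- The family of constituents of `W = U(H_2, D_{0,1},…,D_{6m-1,1}, T)`. -/
def Wfam (b : ℕ) {m : ℕ} (φ : SatInstance m) :
    Option (Fin (6 * m) ⊕ Fin m × Fin 3) → TS (ℕ × ℕ) Ev
  | none => H2 b
  | some (.inl j) => D1 b (j : ℕ)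
  | some (.inr q) => Tgad b (6 * m + 1 + 3 * (q.1 : ℕ) + (q.2 : ℕ)) φ q.1 q.2

def Wun (b : ℕ) {m : ℕ} (φ : SatInstance m) : TS (ℕ × ℕ) Ev := TS.unionFam (Wfam b φ)

/-- The family of constituents of
`U_τ = U(H_3, F_0, G_0, …, F_{m-1}, G_{m-1}, T_0, …, T_{m-1})` for `τ ∈ {τ^b_2, τ^b_3}`. -/
def U2fam (b : ℕ) {m : ℕ} (φ : SatInstance m) :
    Option (Fin m × Fin 3) → TS (ℕ × ℕ) Ev
  | none => H3 b
  | some q => Ttrans2fam b φ q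

def U2 (b : ℕ) {m : ℕ} (φ : SatInstance m) : TS (ℕ × ℕ) Ev := TS.unionFam (U2fam b φ)

/-! ## The joining `A(U)` -/

/-- The joining `A(U)` of a union `U = U(A_0,…,A_n)` of initialized TSs (`A_i`
initialized at `s0 i`): fresh connector states `q_i = Sum.inr i`, fresh events
`w_{i+1} = Sum.inr (Sum.inl i)` (`i : Fin n`) and `y_i = Sum.inr (Sum.inr i)`,
and transitions `q_i --w_{i+1}--> q_{i+1}` and `q_i --y_i--> s0 i`. -/
def joining {S E : Type} {n : ℕ} (F : Fin (n + 1) → TS S E) (s0 : Fin (n + 1) → S)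
    (h0 : ∀ i, s0 i ∈ (F i).states) :
    TS (S ⊕ Fin (n + 1)) (E ⊕ (Fin n ⊕ Fin (n + 1))) where
  states := {st | (∃ a ∈ (TS.unionFam F).states, st = Sum.inl a) ∨ ∃ q, st = Sum.inr q}
  events := {ev | (∃ e ∈ (TS.unionFam F).events, ev = Sum.inl e) ∨ ∃ c, ev = Sum.inr c}
  tr st ev st' :=
    (∃ a e a', (TS.unionFam F).tr a e a' ∧
        st = Sum.inl a ∧ ev = Sum.inl e ∧ st' = Sum.inl a') ∨
    (∃ i : Fin n, st = Sum.inr i.castSucc ∧ ev = Sum.inr (Sum.inl i) ∧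
        st' = Sum.inr i.succ) ∨
    (∃ i : Fin (n + 1), st = Sum.inr i ∧ ev = Sum.inr (Sum.inr i) ∧
        st' = Sum.inl (s0 i))
  tr_mem := by
    rintro st ev st' (⟨a, e, a', h, rfl, rfl, rfl⟩ | ⟨i, rfl, rfl, rfl⟩ | ⟨i, rfl, rfl, rfl⟩)
    · obtain ⟨h1, h2, h3⟩ := (TS.unionFam F).tr_mem h
      exact ⟨Or.inl ⟨a, h1, rfl⟩, Or.inl ⟨e, h2, rfl⟩, Or.inl ⟨a', h3, rfl⟩⟩
    · exact ⟨Or.inr ⟨_, rfl⟩, Or.inr ⟨_, rfl⟩, Or.inr ⟨_, rfl⟩⟩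
    · exact ⟨Or.inr ⟨_, rfl⟩, Or.inr ⟨_, rfl⟩,
        Or.inl ⟨_, Set.mem_iUnion.2 ⟨i, h0 i⟩, rfl⟩⟩
/-! ## Auxiliary lemmas for Statement 7 -/

private lemma bnd' (b x y s c : ℤ) (hb : 1 ≤ b) (hs0 : 0 ≤ s) (hsb : s ≤ b)
    (hc0 : 0 ≤ c) (hcb : c ≤ b) (h : s + b*x = c + b*y) :
    (x = y ∧ s = c) ∨ (x = y+1 ∧ s = c - b) ∨ (y = x+1 ∧ s = c + b) := by
  have e1 : b*(y+1) = b*y + b := by ring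
  have e2 : b*(x+1) = b*x + b := by ring
  have h1 : x ≤ y + 1 :=
    le_of_mul_le_mul_left (show b*x ≤ b*(y+1) by linarith) (by linarith)
  have h2 : y ≤ x + 1 :=
    le_of_mul_le_mul_left (show b*y ≤ b*(x+1) by linarith) (by linarith)
  rcases (by omega : x = y ∨ x = y + 1 ∨ y = x + 1) with rfl | rfl | rfl
  · exact Or.inl ⟨rfl, by linarith⟩
  · exact Or.inr (Or.inl ⟨rfl, by linarith⟩)
  · exact Or.inr (Or.inr ⟨rfl, by linarith⟩)

private lemma clause_arith (b α : ℤ) (hb : 1 ≤ b) (hα : α = 0 ∨ α = b)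
    (m0 p0 m1 p1 m2 p2 mx px mp pp s1 s2 u1 u2 : ℤ)
    (hs1 : 0 ≤ s1) (hs1b : s1 ≤ b) (hs2 : 0 ≤ s2) (hs2b : s2 ≤ b)
    (hu1 : 0 ≤ u1) (hu1b : u1 ≤ b) (hu2 : 0 ≤ u2) (hu2b : u2 ≤ b)
    (e1 : s1 + b*m0 = α + b*p0)
    (e2 : s2 + mx = s1 + px)
    (e3 : (b - α) + b*m2 = s2 + b*p2)
    (e4 : u1 + b*m1 = α + b*p1)
    (e5 : (b - α) + mp = u1 + pp)
    (e6 : u2 + mx = α + px)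
    (e7 : (b - α) + mp = u2 + pp) :
    (m0 ≠ p0 ∧ m1 = p1 ∧ m2 = p2) ∨ (m0 = p0 ∧ m1 ≠ p1 ∧ m2 = p2) ∨
    (m0 = p0 ∧ m1 = p1 ∧ m2 ≠ p2) := by
  have d0 := bnd' b m0 p0 s1 α hb hs1 hs1b (by omega) (by omega) e1
  have d1 := bnd' b m1 p1 u1 α hb hu1 hu1b (by omega) (by omega) e4
  have d2 := bnd' b p2 m2 s2 (b - α) hb hs2 hs2b (by omega) (by omega) (by linarith)
  rcases hα with rfl | rfl <;>
  rcases d0 with ⟨g0, f0⟩ | ⟨g0, f0⟩ | ⟨g0, f0⟩ <;>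
  rcases d1 with ⟨g1, f1⟩ | ⟨g1, f1⟩ | ⟨g1, f1⟩ <;>
  rcases d2 with ⟨g2, f2⟩ | ⟨g2, f2⟩ | ⟨g2, f2⟩ <;>
  first
    | (exfalso; linarith)
    | (exact Or.inl ⟨by intro hcon; linarith, by linarith, by linarith⟩)
    | (exact Or.inr (Or.inl ⟨by linarith, by intro hcon; linarith, by linarith⟩))
    | (exact Or.inr (Or.inr ⟨by linarith, by linarith, by intro hcon; linarith⟩))

private lemma runN (f : ℕ → ℕ) (mm nn s0 : ℕ) :
    ∀ len, (∀ k, k < len → f (s0+k+1) + mm = f (s0+k) + nn) →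
      f (s0+len) + len*mm = f s0 + len*nn
  | 0, _ => by simp
  | (n+1), h => by
      have h1 := h n (Nat.lt_succ_self n)
      have h2 := runN f mm nn s0 n (fun k hk => h k (by omega))
      have e1 : s0 + (n+1) = s0 + n + 1 := by omega
      rw [e1, Nat.succ_mul, Nat.succ_mul]
      linarith

private lemma g_repL {E : Type} (e : E) (n k : ℕ) (l : List E) (hk : k < n) :
    (List.replicate n e ++ l)[k]? = some e := by
  rw [List.getElem?_append_left (by simpa using hk)]
  simp [List.getElem?_replicate, hk]

private lemma g_repR {E : Type} (e : E) (n k : ℕ) (l : List E) :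
    (List.replicate n e ++ l)[n+k]? = l[k]? := by
  rw [List.getElem?_append_right (by simp)]
  simp

private lemma g_repR' {E : Type} (e : E) (n : ℕ) (l : List E) :
    (List.replicate n e ++ l)[n]? = l[0]? := by
  simpa using g_repR e n 0 l

section Extract
variable {b t : ℕ} {m : ℕ} (φ : SatInstance m)

private lemma tword0 (i : Fin m) : Tword b φ i 0 =
    Ev.kj (6*(i:ℕ)) :: (List.replicate b (Ev.X ((φ.C i 0 : Fin m) : ℕ)) ++
      (Ev.x (i:ℕ) :: (List.replicate b (Ev.X ((φ.C i 2 : Fin m) : ℕ)) ++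
        [Ev.kj (6*(i:ℕ)+1)]))) := by
  simp [Tword]

private lemma tword1 (i : Fin m) : Tword b φ i 1 =
    Ev.kj (6*(i:ℕ)+2) :: (List.replicate b (Ev.X ((φ.C i 1 : Fin m) : ℕ)) ++
      [Ev.p (i:ℕ), Ev.kj (6*(i:ℕ)+3)]) := by
  simp [Tword]

private lemma tword2 (i : Fin m) : Tword b φ i 2 =
    [Ev.kj (6*(i:ℕ)+4), Ev.x (i:ℕ), Ev.p (i:ℕ), Ev.kj (6*(i:ℕ)+5)] := by
  simp [Tword]

private lemma ttrans_tr (i : Fin m) (a : Fin 3) {s : ℕ} {e : Ev}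
    (h : (Tword b φ i a)[s]? = some e) :
    (Ttrans b φ).tr (3*(i:ℕ)+(a:ℕ)+1, s) e (3*(i:ℕ)+(a:ℕ)+1, s+1) :=
  ⟨(i, a), s, s + 1, ⟨h, rfl⟩, rfl, rfl⟩

private lemma ev_mem (i : Fin m) (a : Fin 3) {e : Ev} (h : e ∈ Tword b φ i a) :
    e ∈ (Ttrans b φ).events :=
  Set.mem_iUnion.2 ⟨(i, a), h⟩

private lemma st_mem (i : Fin m) (a : Fin 3) {s : ℕ} (h : s ≤ (Tword b φ i a).length) :
    ((3*(i:ℕ)+(a:ℕ)+1, s) : ℕ × ℕ) ∈ (Ttrans b φ).states :=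
  Set.mem_iUnion.2 ⟨(i, a), ⟨s, h, rfl⟩⟩

private lemma sig_shape (R : Region b t (Ttrans b φ)) (ht : t = 0 ∨ t = 1)
    {e : Ev} (i : Fin m) (a : Fin 3) (h : e ∈ Tword b φ i a) :
    ∃ mm nn, R.sig e = Tev.pr mm nn ∧ mm ≤ b ∧ nn ≤ b := by
  have hok := R.sig_ok e (ev_mem φ i a h)
  rcases hsig : R.sig e with ⟨mm, nn⟩ | c
  · rw [hsig] at hok
    exact ⟨mm, nn, rfl, hok.1, hok.2.1⟩
  · rw [hsig] at hok
    rcases hok with ⟨-, h2⟩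
    omega

private lemma stepL (R : Region b t (Ttrans b φ)) (i : Fin m) (a : Fin 3)
    {s : ℕ} {e : Ev} {mm nn : ℕ}
    (hget : (Tword b φ i a)[s]? = some e) (hsig : R.sig e = Tev.pr mm nn) :
    R.sup (3*(i:ℕ)+(a:ℕ)+1, s+1) + mm = R.sup (3*(i:ℕ)+(a:ℕ)+1, s) + nn ∧
    R.sup (3*(i:ℕ)+(a:ℕ)+1, s+1) ≤ b ∧ mm ≤ R.sup (3*(i:ℕ)+(a:ℕ)+1, s) := by
  have hresp := R.resp (ttrans_tr φ i a hget)
  rw [hsig] at hresp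
  simp only [tevStep] at hresp
  split_ifs at hresp with hcond
  have := Option.some.inj hresp
  omega

private lemma get0_k (i : Fin m) :
    (Tword b φ i 0)[0]? = some (Ev.kj (6*(i:ℕ))) := by rw [tword0]; simp

private lemma get0_X0 (i : Fin m) (k : ℕ) (hk : k < b) :
    (Tword b φ i 0)[1+k]? = some (Ev.X ((φ.C i 0 : Fin m) : ℕ)) := by
  rw [tword0, show 1+k = k+1 by omega, List.getElem?_cons_succ]
  exact g_repL _ _ _ _ hk

private lemma get0_x (i : Fin m) :
    (Tword b φ i 0)[1+b]? = some (Ev.x (i:ℕ)) := by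
  rw [tword0, show 1+b = b+1 by omega, List.getElem?_cons_succ, g_repR']
  simp

private lemma get0_X2 (i : Fin m) (k : ℕ) (hk : k < b) :
    (Tword b φ i 0)[1+b+1+k]? = some (Ev.X ((φ.C i 2 : Fin m) : ℕ)) := by
  rw [tword0, show 1+b+1+k = (b+(k+1))+1 by omega, List.getElem?_cons_succ, g_repR,
    List.getElem?_cons_succ]
  exact g_repL _ _ _ _ hk

private lemma get0_k1 (i : Fin m) :
    (Tword b φ i 0)[1+b+1+b]? = some (Ev.kj (6*(i:ℕ)+1)) := by
  rw [tword0, show 1+b+1+b = (b+(b+1))+1 by omega, List.getElem?_cons_succ, g_repR,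
    List.getElem?_cons_succ, g_repR']
  simp

private lemma len0 (i : Fin m) : (Tword b φ i 0).length = 1+b+1+b+1 := by
  rw [tword0]; simp; omega

private lemma get1_k (i : Fin m) :
    (Tword b φ i 1)[0]? = some (Ev.kj (6*(i:ℕ)+2)) := by rw [tword1]; simp

private lemma get1_X1 (i : Fin m) (k : ℕ) (hk : k < b) :
    (Tword b φ i 1)[1+k]? = some (Ev.X ((φ.C i 1 : Fin m) : ℕ)) := by
  rw [tword1, show 1+k = k+1 by omega, List.getElem?_cons_succ]
  exact g_repL _ _ _ _ hk

private lemma get1_p (i : Fin m) :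
    (Tword b φ i 1)[1+b]? = some (Ev.p (i:ℕ)) := by
  rw [tword1, show 1+b = b+1 by omega, List.getElem?_cons_succ, g_repR']
  simp

private lemma get1_k1 (i : Fin m) :
    (Tword b φ i 1)[1+b+1]? = some (Ev.kj (6*(i:ℕ)+3)) := by
  rw [tword1, show 1+b+1 = (b+1)+1 by omega, List.getElem?_cons_succ, g_repR]
  simp

private lemma len1 (i : Fin m) : (Tword b φ i 1).length = 1+b+1+1 := by
  rw [tword1]; simp; omega

private lemma get2_0 (i : Fin m) :
    (Tword b φ i 2)[0]? = some (Ev.kj (6*(i:ℕ)+4)) := by rw [tword2]; simp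
private lemma get2_1 (i : Fin m) :
    (Tword b φ i 2)[1]? = some (Ev.x (i:ℕ)) := by rw [tword2]; simp
private lemma get2_2 (i : Fin m) :
    (Tword b φ i 2)[2]? = some (Ev.p (i:ℕ)) := by rw [tword2]; simp
private lemma get2_3 (i : Fin m) :
    (Tword b φ i 2)[3]? = some (Ev.kj (6*(i:ℕ)+5)) := by rw [tword2]; simp

private lemma clause_one (hb : 1 ≤ b) (R : Region b t (Ttrans b φ)) (ht : t = 0 ∨ t = 1)
    (i : Fin m) (α : ℕ) (hα : α = 0 ∨ α = b)
    (hkk : ∀ j, 6*(i:ℕ) ≤ j → j < 6*(i:ℕ)+6 → R.sig (Ev.kj j) = Tev.pr (b-α) α) :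
    ∃! r : Fin 3, (R.sig (Ev.X ((φ.C i r : Fin m) : ℕ))).minus ≠
      (R.sig (Ev.X ((φ.C i r : Fin m) : ℕ))).plus := by
  have hαb : α ≤ b := by omega
  obtain ⟨m0, p0, hs0, -, -⟩ :=
    sig_shape φ R ht i 0 (List.mem_of_getElem? (get0_X0 φ i 0 hb))
  obtain ⟨m1, p1, hs1, -, -⟩ :=
    sig_shape φ R ht i 1 (List.mem_of_getElem? (get1_X1 φ i 0 hb))
  obtain ⟨m2, p2, hs2, -, -⟩ :=
    sig_shape φ R ht i 0 (List.mem_of_getElem? (get0_X2 φ i 0 hb))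
  obtain ⟨mx, px, hsx, -, -⟩ :=
    sig_shape φ R ht i 2 (List.mem_of_getElem? (get2_1 φ i))
  obtain ⟨mp, pp, hsp, -, -⟩ :=
    sig_shape φ R ht i 2 (List.mem_of_getElem? (get2_2 φ i))
  have hk0 := hkk (6*(i:ℕ)) (by omega) (by omega)
  have hk1 := hkk (6*(i:ℕ)+1) (by omega) (by omega)
  have hk2 := hkk (6*(i:ℕ)+2) (by omega) (by omega)
  have hk3 := hkk (6*(i:ℕ)+3) (by omega) (by omega)
  have hk4 := hkk (6*(i:ℕ)+4) (by omega) (by omega)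
  have hk5 := hkk (6*(i:ℕ)+5) (by omega) (by omega)
  -- chain 0
  have st00 : R.sup (3*(i:ℕ)+((0:Fin 3):ℕ)+1, 0) ≤ b :=
    R.sup_le _ (st_mem φ i 0 (by omega))
  have A0 := stepL φ R i 0 (get0_k φ i) hk0
  simp only [Nat.zero_add] at A0
  have v1 : R.sup (3*(i:ℕ)+((0:Fin 3):ℕ)+1, 1) = α := by
    rcases hα with rfl | rfl <;> omega
  have run0 := runN (fun p => R.sup (3*(i:ℕ)+((0:Fin 3):ℕ)+1, p)) m0 p0 1 b
    (fun k hk => (stepL φ R i 0 (get0_X0 φ i k hk) hs0).1)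
  have bnd1 : R.sup (3*(i:ℕ)+((0:Fin 3):ℕ)+1, 1+b) ≤ b :=
    R.sup_le _ (st_mem φ i 0 (by rw [len0]; omega))
  have hx := stepL φ R i 0 (get0_x φ i) hsx
  have run2 := runN (fun p => R.sup (3*(i:ℕ)+((0:Fin 3):ℕ)+1, p)) m2 p2 (1+b+1) b
    (fun k hk => (stepL φ R i 0 (get0_X2 φ i k hk) hs2).1)
  have A1 := stepL φ R i 0 (get0_k1 φ i) hk1
  have bndE : R.sup (3*(i:ℕ)+((0:Fin 3):ℕ)+1, 1+b+1+b) ≤ b :=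
    R.sup_le _ (st_mem φ i 0 (by rw [len0]; omega))
  have vE : R.sup (3*(i:ℕ)+((0:Fin 3):ℕ)+1, 1+b+1+b) = b - α := by
    rcases hα with rfl | rfl <;> omega
  -- chain 1
  have st10 : R.sup (3*(i:ℕ)+((1:Fin 3):ℕ)+1, 0) ≤ b :=
    R.sup_le _ (st_mem φ i 1 (by omega))
  have B0 := stepL φ R i 1 (get1_k φ i) hk2
  simp only [Nat.zero_add] at B0
  have w1 : R.sup (3*(i:ℕ)+((1:Fin 3):ℕ)+1, 1) = α := by
    rcases hα with rfl | rfl <;> omega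
  have run1 := runN (fun p => R.sup (3*(i:ℕ)+((1:Fin 3):ℕ)+1, p)) m1 p1 1 b
    (fun k hk => (stepL φ R i 1 (get1_X1 φ i k hk) hs1).1)
  have bndu1 : R.sup (3*(i:ℕ)+((1:Fin 3):ℕ)+1, 1+b) ≤ b :=
    R.sup_le _ (st_mem φ i 1 (by rw [len1]; omega))
  have hp := stepL φ R i 1 (get1_p φ i) hsp
  have B1 := stepL φ R i 1 (get1_k1 φ i) hk3
  have wE : R.sup (3*(i:ℕ)+((1:Fin 3):ℕ)+1, 1+b+1) = b - α := by
    rcases hα with rfl | rfl <;> omega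
  -- chain 2
  have st20 : R.sup (3*(i:ℕ)+((2:Fin 3):ℕ)+1, 0) ≤ b :=
    R.sup_le _ (st_mem φ i 2 (by rw [tword2]; simp))
  have C0 := stepL φ R i 2 (get2_0 φ i) hk4
  have Cx := stepL φ R i 2 (get2_1 φ i) hsx
  have Cp := stepL φ R i 2 (get2_2 φ i) hsp
  have C1 := stepL φ R i 2 (get2_3 φ i) hk5
  simp only [show (0+1:ℕ)=1 from rfl, show (1+1:ℕ)=2 from rfl,
    show (2+1:ℕ)=3 from rfl] at C0 Cx Cp C1
  have z1 : R.sup (3*(i:ℕ)+((2:Fin 3):ℕ)+1, 1) = α := by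
    rcases hα with rfl | rfl <;> omega
  have zE : R.sup (3*(i:ℕ)+((2:Fin 3):ℕ)+1, 3) = b - α := by
    rcases hα with rfl | rfl <;> omega
  -- cast everything to ℤ and apply clause_arith
  rw [v1] at run0
  rw [vE] at run2
  rw [w1] at run1
  rw [wE] at hp
  rw [z1] at Cx
  rw [zE] at Cp
  have hcast : ((b - α : ℕ) : ℤ) = (b : ℤ) - (α : ℤ) := by
    rw [Nat.cast_sub hαb]
  have final := clause_arith (b : ℤ) (α : ℤ) (by exact_mod_cast hb)
    (by rcases hα with rfl | rfl <;> simp)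
    m0 p0 m1 p1 m2 p2 mx px mp pp
    (R.sup (3*(i:ℕ)+((0:Fin 3):ℕ)+1, 1+b)) (R.sup (3*(i:ℕ)+((0:Fin 3):ℕ)+1, 1+b+1))
    (R.sup (3*(i:ℕ)+((1:Fin 3):ℕ)+1, 1+b)) (R.sup (3*(i:ℕ)+((2:Fin 3):ℕ)+1, 2))
    (by positivity) (by exact_mod_cast bnd1)
    (by positivity) (by exact_mod_cast hx.2.1)
    (by positivity) (by exact_mod_cast bndu1)
    (by positivity) (by exact_mod_cast Cx.2.1)
    (by exact_mod_cast run0)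
    (by exact_mod_cast hx.1)
    (by rw [← hcast]; exact_mod_cast run2)
    (by exact_mod_cast run1)
    (by rw [← hcast]; exact_mod_cast hp.1)
    (by exact_mod_cast Cx.1)
    (by rw [← hcast]; exact_mod_cast Cp.1)
  rcases final with ⟨h0, h1, h2⟩ | ⟨h0, h1, h2⟩ | ⟨h0, h1, h2⟩
  · refine ⟨0, ?_, ?_⟩
    · simp only [ne_eq]
      rw [hs0]
      intro hcon
      exact h0 (by exact_mod_cast hcon)
    · intro y hy
      simp only [ne_eq] at hy
      fin_cases y
      · rfl
      · exfalso
        exact hy (show (R.sig (Ev.X ((φ.C i 1 : Fin m) : ℕ))).minus =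
          (R.sig (Ev.X ((φ.C i 1 : Fin m) : ℕ))).plus by
            rw [hs1]; show m1 = p1; exact_mod_cast h1)
      · exfalso
        exact hy (show (R.sig (Ev.X ((φ.C i 2 : Fin m) : ℕ))).minus =
          (R.sig (Ev.X ((φ.C i 2 : Fin m) : ℕ))).plus by
            rw [hs2]; show m2 = p2; exact_mod_cast h2)
  · refine ⟨1, ?_, ?_⟩
    · simp only [ne_eq]
      rw [hs1]
      intro hcon
      exact h1 (by exact_mod_cast hcon)
    · intro y hy
      simp only [ne_eq] at hy
      fin_cases y
      · exfalso
        exact hy (show (R.sig (Ev.X ((φ.C i 0 : Fin m) : ℕ))).minus =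
          (R.sig (Ev.X ((φ.C i 0 : Fin m) : ℕ))).plus by
            rw [hs0]; show m0 = p0; exact_mod_cast h0)
      · rfl
      · exfalso
        exact hy (show (R.sig (Ev.X ((φ.C i 2 : Fin m) : ℕ))).minus =
          (R.sig (Ev.X ((φ.C i 2 : Fin m) : ℕ))).plus by
            rw [hs2]; show m2 = p2; exact_mod_cast h2)
  · refine ⟨2, ?_, ?_⟩
    · simp only [ne_eq]
      rw [hs2]
      intro hcon
      exact h2 (by exact_mod_cast hcon)
    · intro y hy
      simp only [ne_eq] at hy
      fin_cases y
      · exfalso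
        exact hy (show (R.sig (Ev.X ((φ.C i 0 : Fin m) : ℕ))).minus =
          (R.sig (Ev.X ((φ.C i 0 : Fin m) : ℕ))).plus by
            rw [hs0]; show m0 = p0; exact_mod_cast h0)
      · exfalso
        exact hy (show (R.sig (Ev.X ((φ.C i 1 : Fin m) : ℕ))).minus =
          (R.sig (Ev.X ((φ.C i 1 : Fin m) : ℕ))).plus by
            rw [hs1]; show m1 = p1; exact_mod_cast h1)
      · rfl

end Extract

/-- Completeness of the translator `T`: for `τ ∈ {τ^b_0, τ^b_1}`,
if a `τ`-region of `T` satisfies `sig(k_0) = … = sig(k_{6m-1}) = (0,b)` or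
`sig(k_0) = … = sig(k_{6m-1}) = (b,0)`, then `φ` has a one-in-three model. -/
theorem stmt7 (b t : ℕ) (hb : 1 ≤ b) (ht : t = 0 ∨ t = 1)
    {m : ℕ} (hm : 1 ≤ m) (φ : SatInstance m)
    (R : Region b t (Ttrans b φ))
    (hk : (∀ j < 6 * m, R.sig (Ev.kj j) = Tev.pr 0 b) ∨
          (∀ j < 6 * m, R.sig (Ev.kj j) = Tev.pr b 0)) :
    ∃ M : Set (Fin m), φ.model M := by
  rcases hk with hk | hk
  · refine ⟨{v : Fin m | (R.sig (Ev.X ((v : Fin m) : ℕ))).minus ≠ (R.sig (Ev.X ((v : Fin m) : ℕ))).plus}, ?_⟩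
    intro i
    have h := clause_one φ hb R ht i b (Or.inr rfl) (fun j h1 h2 => by
      have hi := i.isLt
      have := hk j (by omega)
      simpa [Nat.sub_self] using this)
    exact h
  · refine ⟨{v : Fin m | (R.sig (Ev.X ((v : Fin m) : ℕ))).minus ≠ (R.sig (Ev.X ((v : Fin m) : ℕ))).plus}, ?_⟩
    intro i
    have h := clause_one φ hb R ht i 0 (Or.inl rfl) (fun j h1 h2 => by
      have hi := i.isLt
      have := hk j (by omega)
      simpa [Nat.sub_zero] using this)
    exact h
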